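/- Parallelogram lemma: let m₁, m̄₁, m₂, m̄₂ ∈ ℝ² satisfy |m₁| = |m̄₁| = |m₂| = |m̄₂| and m₁ − m̄₁ + m₂ − m̄₂ = 0. Then at least one of the following holds: (i) m₁ = m̄₁ and m₂ = m̄₂; (ii) m₁ = −m₂ and m̄₁ = −m̄₂; (iii) m₁ = m̄₂ and m₂ = m̄₁. -/

import Mathlib

theorem para_key (a b c d e f : ℝ)
    (h1 : a^2 + b^2 = c^2 + d^2) (h2 : c^2 + d^2 = e^2 + f^2)
    (h3 : e^2 + f^2 = (a - c + e)^2 + (b - d + f)^2) :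
    (a = c ∧ b = d) ∨ (a = -e ∧ b = -f) ∨ (c = e ∧ d = f) := by
  have orth1 : (a+e)*(a-c) + (b+f)*(b-d) = 0 := by linear_combination (1/2)*h1 - (1/2)*h3
  have orth2 : (a+e)*(e-c) + (b+f)*(f-d) = 0 := by
    linear_combination (-(1/2))*h1 - h2 - (1/2)*h3
  by_cases hS : (a+e)^2 + (b+f)^2 = 0
  · right; left
    constructor <;> nlinarith [sq_nonneg (a+e), sq_nonneg (b+f)]
  · have hD : (a-c)*(f-d) - (b-d)*(e-c) = 0 := by
      have h5 : ((a+e)^2 + (b+f)^2) * ((a-c)*(f-d) - (b-d)*(e-c)) = 0 := by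
        linear_combination ((a+e)*(f-d) - (b+f)*(e-c)) * orth1 +
          ((b+f)*(a-c) - (a+e)*(b-d)) * orth2
      exact (mul_eq_zero.mp h5).resolve_left hS
    by_cases hU : (a-c)^2 + (b-d)^2 = 0
    · left
      constructor <;> nlinarith [sq_nonneg (a-c), sq_nonneg (b-d)]
    · right; right
      have hNV1 : ((a-c)^2+(b-d)^2) * (e-c) = ((a-c)*(e-c)+(b-d)*(f-d)) * (a-c) := by linear_combination (-(b-d)) * hD
      have hNV2 : ((a-c)^2+(b-d)^2) * (f-d) = ((a-c)*(e-c)+(b-d)*(f-d)) * (b-d) := by linear_combination (a-c) * hD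
      have hcd : c*(a-c) + d*(b-d) = -(((a-c)^2+(b-d)^2)/2) := by linear_combination (1/2)*h1
      have hV : 2*(c*(e-c) + d*(f-d)) + ((e-c)^2 + (f-d)^2) = 0 := by
        linear_combination -h2
      have h6 : ((a-c)^2+(b-d)^2) * (((a-c)*(e-c)+(b-d)*(f-d)) * (((a-c)*(e-c)+(b-d)*(f-d)) - ((a-c)^2+(b-d)^2))) = 0 := by
        linear_combination ((a-c)^2+(b-d)^2)^2 * hV - 2*((a-c)^2+(b-d)^2)*((a-c)*(e-c)+(b-d)*(f-d)) * hcd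
          - (2*((a-c)^2+(b-d)^2)*c + ((a-c)^2+(b-d)^2)*(e-c) + ((a-c)*(e-c)+(b-d)*(f-d))*(a-c)) * hNV1
          - (2*((a-c)^2+(b-d)^2)*d + ((a-c)^2+(b-d)^2)*(f-d) + ((a-c)*(e-c)+(b-d)*(f-d))*(b-d)) * hNV2
      have hPN : ((a-c)*(e-c)+(b-d)*(f-d)) * (((a-c)*(e-c)+(b-d)*(f-d)) - ((a-c)^2+(b-d)^2)) = 0 := (mul_eq_zero.mp h6).resolve_left hU
      rcases mul_eq_zero.mp hPN with hP0 | hP1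
      · have e1 : ((a-c)^2+(b-d)^2) * (e-c) = 0 := by rw [hNV1, hP0]; ring
        have e2 : ((a-c)^2+(b-d)^2) * (f-d) = 0 := by rw [hNV2, hP0]; ring
        constructor
        · have := (mul_eq_zero.mp e1).resolve_left hU; linarith
        · have := (mul_eq_zero.mp e2).resolve_left hU; linarith
      · have hPeq : ((a-c)*(e-c)+(b-d)*(f-d)) = ((a-c)^2+(b-d)^2) := by linarith [sub_eq_zero.mp hP1]
        have e1 : ((a-c)^2+(b-d)^2) * ((e-c) - (a-c)) = 0 := by
          rw [mul_sub, hNV1, hPeq]; ring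
        have e2 : ((a-c)^2+(b-d)^2) * ((f-d) - (b-d)) = 0 := by
          rw [mul_sub, hNV2, hPeq]; ring
        have hea : e = a := by have := (mul_eq_zero.mp e1).resolve_left hU; linarith
        have hfb : f = b := by have := (mul_eq_zero.mp e2).resolve_left hU; linarith
        exfalso
        apply hU
        subst hea hfb
        nlinarith [h1, h3]

lemma euc_normsq (x : EuclideanSpace ℝ (Fin 2)) : ‖x‖^2 = (x 0)^2 + (x 1)^2 := by
  rw [EuclideanSpace.norm_eq, Real.sq_sqrt (by positivity)]
  simp [Fin.sum_univ_two, Real.norm_eq_abs, sq_abs]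

/-- Parallelogram lemma: any four vectors of equal Euclidean norm in the plane with
`m₁ - m̄₁ + m₂ - m̄₂ = 0` form either a parallelogram or one of two degenerate
configurations. -/
theorem parallelogram_lemma
    (m₁ mb₁ m₂ mb₂ : EuclideanSpace ℝ (Fin 2))
    (h₁ : ‖m₁‖ = ‖mb₁‖) (h₂ : ‖mb₁‖ = ‖m₂‖) (h₃ : ‖m₂‖ = ‖mb₂‖)
    (hsum : m₁ - mb₁ + m₂ - mb₂ = 0) :
    (m₁ = mb₁ ∧ m₂ = mb₂) ∨ (m₁ = -m₂ ∧ mb₁ = -mb₂) ∨ (m₁ = mb₂ ∧ m₂ = mb₁) := by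
  have q₁ : ‖m₁‖^2 = ‖mb₁‖^2 := by rw [h₁]
  have q₂ : ‖mb₁‖^2 = ‖m₂‖^2 := by rw [h₂]
  have q₃ : ‖m₂‖^2 = ‖mb₂‖^2 := by rw [h₃]
  rw [euc_normsq, euc_normsq] at q₁ q₂ q₃
  have hs0 : m₁ 0 - mb₁ 0 + m₂ 0 - mb₂ 0 = 0 := by have := congrArg (fun v : EuclideanSpace ℝ (Fin 2) => v 0) hsum; simpa using this
  have hs1 : m₁ 1 - mb₁ 1 + m₂ 1 - mb₂ 1 = 0 := by have := congrArg (fun v : EuclideanSpace ℝ (Fin 2) => v 1) hsum; simpa using this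
  have hb0 : mb₂ 0 = m₁ 0 - mb₁ 0 + m₂ 0 := by linarith
  have hb1 : mb₂ 1 = m₁ 1 - mb₁ 1 + m₂ 1 := by linarith
  rw [hb0, hb1] at q₃
  have key := para_key (m₁ 0) (m₁ 1) (mb₁ 0) (mb₁ 1) (m₂ 0) (m₂ 1) q₁ q₂ q₃
  have ext2 : ∀ x y : EuclideanSpace ℝ (Fin 2), x 0 = y 0 → x 1 = y 1 → x = y := by
    intro x y h0 h1'
    ext i
    fin_cases i <;> assumption
  rcases key with ⟨u, v⟩ | ⟨u, v⟩ | ⟨u, v⟩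
  · left
    refine ⟨ext2 _ _ u v, ext2 _ _ ?_ ?_⟩ <;> linarith [hb0, hb1]
  · right; left
    have e1 : m₁ = -m₂ := ext2 _ _ (by simpa using u) (by simpa using v)
    have e2 : mb₁ = -mb₂ := by
      refine ext2 _ _ ?_ ?_ <;> simp only [PiLp.neg_apply] <;> linarith [hb0, hb1]
    exact ⟨e1, e2⟩
  · right; right
    refine ⟨ext2 _ _ ?_ ?_, ext2 _ _ u.symm v.symm⟩ <;> linarith [hb0, hb1]
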